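/- Suppose a sequence of nonnegative numbers $(\widetilde\eta_\ell)_{\ell\in\mathbb{N}_0}$ and a sequence of nonnegative perturbations $(\varrho_\ell)_{\ell\in\mathbb{N}_0}$ satisfy: (i) estimator reduction $\widetilde\eta_{\ell+1}^2 \le q\,\widetilde\eta_\ell^2 + C\,\varrho_\ell^2$ for some $0<q<1$, $C>0$; and (ii) general quasi-orthogonality $\sum_{k=\ell}^{\ell+N}(\varrho_k^2 - \varepsilon\,\widetilde\eta_k^2) \le C_{\rm qo}\,\widetilde\eta_\ell^2$ for all $\ell,N\in\mathbb{N}_0$, where $0 \le \varepsilon < (1-q)/C$. Then the sequence converges linearly: there exist $C_{\rm conv}>0$ and $0<q_{\rm conv}<1$ such that $\widetilde\eta_{\ell+k} \le C_{\rm conv}\, q_{\rm conv}^k\, \widetilde\eta_\ell$ for all $k,\ell\in\mathbb{N}_0$. -/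

import Mathlib

/-- Abstract linear convergence: estimator reduction together with general
quasi-orthogonality implies linear convergence of the estimator sequence. -/
theorem linear_convergence_of_estimator_reduction_and_quasi_orthogonality
    (η ρ : ℕ → ℝ) (q C ε Cqo : ℝ)
    (hq0 : 0 < q) (hq1 : q < 1) (hC : 0 < C)
    (hη : ∀ ℓ, 0 ≤ η ℓ) (hρ : ∀ ℓ, 0 ≤ ρ ℓ)
    (hred : ∀ ℓ, η (ℓ + 1) ^ 2 ≤ q * η ℓ ^ 2 + C * ρ ℓ ^ 2)
    (hε0 : 0 ≤ ε) (hε : ε < (1 - q) / C)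
    (hqo : ∀ ℓ N : ℕ,
      ∑ k ∈ Finset.Icc ℓ (ℓ + N), (ρ k ^ 2 - ε * η k ^ 2) ≤ Cqo * η ℓ ^ 2) :
    ∃ Cconv > (0 : ℝ), ∃ qconv : ℝ, 0 < qconv ∧ qconv < 1 ∧
      ∀ k ℓ : ℕ, η (ℓ + k) ≤ Cconv * qconv ^ k * η ℓ := by
  set a : ℕ → ℝ := fun i => η i ^ 2 with ha
  have hann : ∀ i, 0 ≤ a i := fun i => sq_nonneg _
  have hμ1 : q + C * ε < 1 := by
    have h1 : ε * C < 1 - q := (lt_div_iff₀ hC).mp hε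
    nlinarith
  have hμ0 : 0 < q + C * ε := by positivity
  set K : ℝ := max ((q + C * ε + C * Cqo) / (1 - (q + C * ε))) 0 with hK
  have hK0 : 0 ≤ K := le_max_right _ _
  set M : ℝ := 2 + K with hM
  have hM2 : (2:ℝ) ≤ M := by simp [hM, hK0]
  have hM0 : (0:ℝ) < M := by linarith
  -- reindexing lemma
  have hshift : ∀ ℓ N : ℕ, (∑ k ∈ Finset.Icc (ℓ+1) (ℓ+1+N), a k)
      = ∑ k ∈ Finset.Icc ℓ (ℓ+N), a (k+1) := by
    intro ℓ N
    induction N with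
    | zero => simp
    | succ n ih =>
        rw [show ℓ+1+(n+1) = (ℓ+1+n)+1 from rfl,
          Finset.sum_Icc_succ_top (by omega),
          show ℓ+(n+1) = (ℓ+n)+1 from rfl,
          Finset.sum_Icc_succ_top (by omega), ih]
        ring_nf
  -- split off bottom element
  have hbot : ∀ ℓ N : ℕ, (∑ k ∈ Finset.Icc ℓ (ℓ+N), a k)
      = a ℓ + ∑ k ∈ Finset.Icc (ℓ+1) (ℓ+N), a k := by
    intro ℓ N
    rw [← Finset.Ioc_insert_left (by omega : ℓ ≤ ℓ+N),
      Finset.sum_insert (by simp), Finset.Icc_add_one_left_eq_Ioc]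
  -- tail sum bound
  have hS : ∀ ℓ N : ℕ, (∑ k ∈ Finset.Icc (ℓ+1) (ℓ+1+N), a k) ≤ K * a ℓ := by
    intro ℓ N
    set S := ∑ k ∈ Finset.Icc (ℓ+1) (ℓ+1+N), a k with hSdef
    set T := ∑ k ∈ Finset.Icc ℓ (ℓ+N), a k with hTdef
    have h1 : S ≤ q * T + C * ∑ k ∈ Finset.Icc ℓ (ℓ+N), ρ k ^ 2 := by
      rw [hSdef, hshift, Finset.mul_sum, Finset.mul_sum, ← Finset.sum_add_distrib]
      exact Finset.sum_le_sum fun i _ => hred i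
    have h2 : (∑ k ∈ Finset.Icc ℓ (ℓ+N), ρ k ^ 2) ≤ ε * T + Cqo * a ℓ := by
      have := hqo ℓ N
      rw [Finset.sum_sub_distrib] at this
      rw [hTdef, Finset.mul_sum]
      simp only [ha] at this ⊢
      linarith [this]
    have h3 : T ≤ a ℓ + S := by
      rw [hTdef, hbot]
      have : (∑ k ∈ Finset.Icc (ℓ+1) (ℓ+N), a k) ≤ S := by
        apply Finset.sum_le_sum_of_subset_of_nonneg
        · exact Finset.Icc_subset_Icc_right (by omega)
        · exact fun i _ _ => hann i
      linarith
    have h4 : (1 - (q + C * ε)) * S ≤ (q + C * ε + C * Cqo) * a ℓ := by nlinarith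
    have h5 : S ≤ (q + C * ε + C * Cqo) / (1 - (q + C * ε)) * a ℓ := by
      rw [div_mul_eq_mul_div, le_div_iff₀ (by linarith)]
      nlinarith
    calc S ≤ _ := h5
      _ ≤ K * a ℓ := mul_le_mul_of_nonneg_right (le_max_left _ _) (hann ℓ)
  have hSum : ∀ ℓ N : ℕ, (∑ k ∈ Finset.Icc ℓ (ℓ+N), a k) ≤ M * a ℓ := by
    intro ℓ N
    rw [hbot]
    have h1 : (∑ k ∈ Finset.Icc (ℓ+1) (ℓ+N), a k)
        ≤ ∑ k ∈ Finset.Icc (ℓ+1) (ℓ+1+N), a k := by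
      apply Finset.sum_le_sum_of_subset_of_nonneg
      · exact Finset.Icc_subset_Icc_right (by omega)
      · exact fun i _ _ => hann i
    have := hS ℓ N
    nlinarith [hann ℓ]
  set ν : ℝ := 1 - 1/M with hν
  have hν0 : 0 < ν := by
    have : 1/M ≤ 1/2 := by
      rw [div_le_div_iff₀ hM0 (by norm_num)]; linarith
    simp only [hν]; linarith
  have hν1 : ν < 1 := by
    have : 0 < 1/M := by positivity
    simp only [hν]; linarith
  have hMain : ∀ k ℓ N : ℕ, (∑ i ∈ Finset.Icc (ℓ+k) (ℓ+k+N), a i) ≤ M * ν ^ k * a ℓ := by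
    intro k
    induction k with
    | zero => intro ℓ N; simpa using hSum ℓ N
    | succ k ih =>
        intro ℓ N
        have hEq : (∑ i ∈ Finset.Icc (ℓ+k) (ℓ+k+(N+1)), a i)
            = a (ℓ+k) + ∑ i ∈ Finset.Icc (ℓ+(k+1)) (ℓ+(k+1)+N), a i := by
          rw [hbot]; ring_nf
        have h1 : (∑ i ∈ Finset.Icc (ℓ+k) (ℓ+k+(N+1)), a i) ≤ M * a (ℓ+k) :=
          hSum (ℓ+k) (N+1)
        have h2 := ih ℓ (N+1)
        have h3 : (∑ i ∈ Finset.Icc (ℓ+(k+1)) (ℓ+(k+1)+N), a i)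
            ≤ ν * ∑ i ∈ Finset.Icc (ℓ+k) (ℓ+k+(N+1)), a i := by
          rw [hEq] at h1 ⊢
          have hSnn : (0:ℝ) ≤ ∑ i ∈ Finset.Icc (ℓ+(k+1)) (ℓ+(k+1)+N), a i :=
            Finset.sum_nonneg fun i _ => hann i
          have hinv : (1/M) * (a (ℓ+k) + ∑ i ∈ Finset.Icc (ℓ+(k+1)) (ℓ+(k+1)+N), a i)
              ≤ a (ℓ+k) := by
            calc (1/M) * (a (ℓ+k) + ∑ i ∈ Finset.Icc (ℓ+(k+1)) (ℓ+(k+1)+N), a i)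
                ≤ (1/M) * (M * a (ℓ+k)) :=
                  mul_le_mul_of_nonneg_left h1 (by positivity)
              _ = a (ℓ+k) := by field_simp
          rw [hν]
          nlinarith [hinv]
        calc (∑ i ∈ Finset.Icc (ℓ+(k+1)) (ℓ+(k+1)+N), a i)
            ≤ ν * ∑ i ∈ Finset.Icc (ℓ+k) (ℓ+k+(N+1)), a i := h3
          _ ≤ ν * (M * ν ^ k * a ℓ) := mul_le_mul_of_nonneg_left h2 hν0.le
          _ = M * ν ^ (k+1) * a ℓ := by ring
  have hKey : ∀ k ℓ : ℕ, a (ℓ+k) ≤ M * ν ^ k * a ℓ := by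
    intro k ℓ
    have := hMain k ℓ 0
    simpa using this
  refine ⟨Real.sqrt M, Real.sqrt_pos.mpr hM0, Real.sqrt ν, Real.sqrt_pos.mpr hν0,
    ?_, ?_⟩
  · rw [show (1:ℝ) = Real.sqrt 1 from (Real.sqrt_one).symm]
    exact Real.sqrt_lt_sqrt hν0.le hν1
  · intro k ℓ
    have h1 : η (ℓ+k) = Real.sqrt (a (ℓ+k)) := (Real.sqrt_sq (hη _)).symm
    have h2 : Real.sqrt (a (ℓ+k)) ≤ Real.sqrt (M * ν ^ k * a ℓ) :=
      Real.sqrt_le_sqrt (hKey k ℓ)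
    have hpow : ∀ n : ℕ, Real.sqrt (ν ^ n) = Real.sqrt ν ^ n := by
      intro n
      induction n with
      | zero => simp
      | succ n ih => rw [pow_succ, Real.sqrt_mul (pow_nonneg hν0.le n), ih, pow_succ]
    have h3 : Real.sqrt (M * ν ^ k * a ℓ)
        = Real.sqrt M * Real.sqrt ν ^ k * η ℓ := by
      rw [Real.sqrt_mul (by positivity), Real.sqrt_mul hM0.le, hpow, ha,
        Real.sqrt_sq (hη ℓ)]
    rw [h1, ← h3]; exact h2
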